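/- Let σ be a simple permutation with |σ| ≥ 4. Then either 2413 or 3142 is a pattern of σ. -/

import Mathlib

open Equiv Filter Asymptotics

/-- `π` (of size `k`) is a pattern of `σ` (of size `n`): there is a strictly increasing
sequence of positions of `σ` whose values are order-isomorphic to `π`. -/
def IsPattern {k n : ℕ} (π : Equiv.Perm (Fin k)) (σ : Equiv.Perm (Fin n)) : Prop :=
  ∃ f : Fin k ↪o Fin n, ∀ i j : Fin k, π i < π j ↔ σ (f i) < σ (f j)

/-- A set of positions is consecutive (an integer interval). -/
def IsConsecutive {n : ℕ} (s : Finset (Fin n)) : Prop :=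
  ∀ ⦃i j k : Fin n⦄, i ∈ s → k ∈ s → i ≤ j → j ≤ k → j ∈ s

/-- An interval of a permutation: a consecutive set of positions whose image is
a consecutive set of values. -/
def IsPermInterval {n : ℕ} (σ : Equiv.Perm (Fin n)) (s : Finset (Fin n)) : Prop :=
  IsConsecutive s ∧ IsConsecutive (s.image σ)

/-- A permutation is simple if its only intervals are the trivial ones. -/
def IsSimple {n : ℕ} (σ : Equiv.Perm (Fin n)) : Prop :=
  ∀ s : Finset (Fin n), IsPermInterval σ s → s.card ≤ 1 ∨ s = Finset.univ

/-- Value at (0-indexed) position `i` of the exceptional permutation of size `2*m`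
of type `t` (0-indexed types: paper's types 1,2,3,4 are `t = 0,1,2,3`). -/
def exceptionalValue (t : Fin 4) (m i : ℕ) : ℕ :=
  if t = 0 then (if i < m then 2 * i + 1 else 2 * (i - m))
  else if t = 1 then (if i < m then 2 * (m - i - 1) else 2 * (2 * m - i) - 1)
  else if t = 2 then (if i % 2 = 0 then m + i / 2 else i / 2)
  else (if i % 2 = 0 then m - i / 2 - 1 else 2 * m - i / 2 - 1)

/-- `σ` is the exceptional permutation of type `t` (of its size). -/
def IsExceptionalOfType {n : ℕ} (t : Fin 4) (σ : Equiv.Perm (Fin n)) : Prop :=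
  ∃ m : ℕ, 2 ≤ m ∧ n = 2 * m ∧ ∀ i : Fin n, (σ i : ℕ) = exceptionalValue t m (i : ℕ)

/-- `σ` is exceptional. -/
def IsExceptional {n : ℕ} (σ : Equiv.Perm (Fin n)) : Prop :=
  ∃ t : Fin 4, IsExceptionalOfType t σ

/-- `τ` is the permutation obtained from `σ` by deleting the point at position `i`
(and renormalizing). -/
def IsDeletion {n : ℕ} (σ : Equiv.Perm (Fin (n + 1))) (i : Fin (n + 1))
    (τ : Equiv.Perm (Fin n)) : Prop :=
  ∀ j k : Fin n, τ j < τ k ↔ σ (i.succAbove j) < σ (i.succAbove k)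

/-- The permutation 2413. -/
def p2413 : Equiv.Perm (Fin 4) := ⟨![1, 3, 0, 2], ![2, 0, 3, 1], by decide, by decide⟩

/-- The permutation 3142. -/
def p3142 : Equiv.Perm (Fin 4) := ⟨![2, 0, 3, 1], ![1, 3, 0, 2], by decide, by decide⟩

/-- The number of simple permutations of size `n`. -/
noncomputable def simpleCount (n : ℕ) : ℕ :=
  Nat.card {σ : Equiv.Perm (Fin n) // IsSimple σ}

/-- The average outdegree `D_n = s_{n-1} · n(n-4) / s_n`. -/
noncomputable def avgOutdeg (n : ℕ) : ℝ :=
  (simpleCount (n - 1) : ℝ) * ((n : ℝ) * ((n : ℝ) - 4)) / (simpleCount n : ℝ)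

/-- The outdegree of a permutation: the number of positions whose deletion
yields a simple permutation. -/
noncomputable def outdeg : ∀ {n : ℕ}, Equiv.Perm (Fin n) → ℕ
  | 0, _ => 0
  | _ + 1, σ =>
    Nat.card {i // ∃ τ, IsDeletion σ i τ ∧ IsSimple τ}

/-- `S_n^k`: the number of simple permutations of size `n` with outdegree `k`. -/
noncomputable def outdegCount (n k : ℕ) : ℕ :=
  Nat.card {σ : Equiv.Perm (Fin n) // IsSimple σ ∧ outdeg σ = k}

namespace SimplePf

variable {n : ℕ}

/-- Inversion graph adjacency. -/
def E (σ : Equiv.Perm (Fin n)) (a b : Fin n) : Prop :=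
  ((a : ℕ) < b ∧ (σ b : ℕ) < σ a) ∨ ((b : ℕ) < a ∧ (σ a : ℕ) < σ b)

/-- Non-inversion graph adjacency. -/
def E' (σ : Equiv.Perm (Fin n)) (a b : Fin n) : Prop :=
  ((a : ℕ) < b ∧ (σ a : ℕ) < σ b) ∨ ((b : ℕ) < a ∧ (σ b : ℕ) < σ a)

lemma E_symm (σ : Equiv.Perm (Fin n)) : ∀ a b : Fin n, E σ a b → E σ b a := by
  intro a b h; unfold E at *; tauto

lemma E'_symm (σ : Equiv.Perm (Fin n)) : ∀ a b : Fin n, E' σ a b → E' σ b a := by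
  intro a b h; unfold E' at *; tauto

lemma E_irr (σ : Equiv.Perm (Fin n)) : ∀ a : Fin n, ¬ E σ a a := by
  intro a h; unfold E at h; omega

lemma E'_irr (σ : Equiv.Perm (Fin n)) : ∀ a : Fin n, ¬ E' σ a a := by
  intro a h; unfold E' at h; omega

lemma E_ne {σ : Equiv.Perm (Fin n)} {a b : Fin n} (h : E σ a b) : a ≠ b := by
  rintro rfl; exact E_irr σ a h

lemma E'_ne {σ : Equiv.Perm (Fin n)} {a b : Fin n} (h : E' σ a b) : a ≠ b := by
  rintro rfl; exact E'_irr σ a h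

lemma E_excl (σ : Equiv.Perm (Fin n)) : ∀ a b : Fin n, E σ a b → E' σ a b → False := by
  intro a b h h'; unfold E E' at *; omega

lemma E'_excl (σ : Equiv.Perm (Fin n)) : ∀ a b : Fin n, E' σ a b → E σ a b → False := by
  intro a b h h'; unfold E E' at *; omega

lemma val_ne {a b : Fin n} (h : a ≠ b) : (a : ℕ) ≠ b :=
  fun hc => h (Fin.val_injective hc)

lemma sval_ne {σ : Equiv.Perm (Fin n)} {a b : Fin n} (h : a ≠ b) : (σ a : ℕ) ≠ σ b :=
  fun hc => h (σ.injective (Fin.val_injective hc))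

lemma E_tot (σ : Equiv.Perm (Fin n)) : ∀ a b : Fin n, a ≠ b → E σ a b ∨ E' σ a b := by
  intro a b h
  have h1 := val_ne h
  have h2 := sval_ne (σ := σ) h
  unfold E E'; omega

lemma E'_tot (σ : Equiv.Perm (Fin n)) : ∀ a b : Fin n, a ≠ b → E' σ a b ∨ E σ a b := by
  intro a b h; exact (E_tot σ a b h).symm

/-- `S` splits into two nonempty parts with no `r`-edges across. -/
def SplitOn (r : Fin n → Fin n → Prop) (S : Finset (Fin n)) : Prop :=
  ∃ A B : Finset (Fin n), A.Nonempty ∧ B.Nonempty ∧ Disjoint A B ∧ A ∪ B = S ∧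
    ∀ a ∈ A, ∀ b ∈ B, ¬ r a b

/-- `S` contains an induced path on four vertices for `r`. -/
def HasP4 (r : Fin n → Fin n → Prop) (S : Finset (Fin n)) : Prop :=
  ∃ x y z w : Fin n, x ∈ S ∧ y ∈ S ∧ z ∈ S ∧ w ∈ S ∧
    x ≠ y ∧ x ≠ z ∧ x ≠ w ∧ y ≠ z ∧ y ≠ w ∧ z ≠ w ∧
    r x y ∧ r y z ∧ r z w ∧ ¬ r x z ∧ ¬ r x w ∧ ¬ r y w

lemma hasP4_mono {r : Fin n → Fin n → Prop} {S T : Finset (Fin n)} (hST : S ⊆ T)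
    (h : HasP4 r S) : HasP4 r T := by
  obtain ⟨x, y, z, w, hx, hy, hz, hw, hrest⟩ := h
  exact ⟨x, y, z, w, hST hx, hST hy, hST hz, hST hw, hrest⟩

open Finset

lemma inner (r : Fin n → Fin n → Prop) (hsymm : ∀ a b, r a b → r b a)
    (hirr : ∀ a, ¬ r a a)
    (v : Fin n) (A B : Finset (Fin n))
    (hvA : v ∉ A) (hvB : v ∉ B) (hdisj : Disjoint A B)
    (hcross : ∀ a ∈ A, ∀ b ∈ B, ¬ r a b)
    (b : Fin n) (hbB : b ∈ B) (hrb : r v b)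
    (u : Fin n) (huA : u ∈ A) (hru : ¬ r v u) :
    SplitOn r (insert v (A ∪ B)) ∨ HasP4 r (insert v (A ∪ B)) := by
  classical
  by_cases hedge : ∃ x ∈ A, ∃ y ∈ A, r v x ∧ ¬ r v y ∧ r x y
  · obtain ⟨x, hxA, y, hyA, hvx, hvy, hxy⟩ := hedge
    right
    have hyx : y ≠ x := by rintro rfl; exact hirr _ hxy
    have hyv : y ≠ v := by rintro rfl; exact hvA hyA
    have hyb : y ≠ b := by rintro rfl; exact (disjoint_left.mp hdisj) hyA hbB
    have hxv : x ≠ v := by rintro rfl; exact hvA hxA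
    have hxb : x ≠ b := by rintro rfl; exact (disjoint_left.mp hdisj) hxA hbB
    have hvb : v ≠ b := by rintro rfl; exact hvB hbB
    refine ⟨y, x, v, b, ?_, ?_, ?_, ?_, hyx, hyv, hyb, hxv, hxb, hvb,
      hsymm _ _ hxy, hsymm _ _ hvx, hrb, (fun h => hvy (hsymm _ _ h)),
      hcross y hyA b hbB, hcross x hxA b hbB⟩
    · exact mem_insert_of_mem (mem_union_left _ hyA)
    · exact mem_insert_of_mem (mem_union_left _ hxA)
    · exact mem_insert_self _ _
    · exact mem_insert_of_mem (mem_union_right _ hbB)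
  · left
    have hedge' : ∀ x ∈ A, ∀ y ∈ A, r v x → ¬ r v y → ¬ r x y := by
      intro x hx y hy h1 h2 h3; exact hedge ⟨x, hx, y, hy, h1, h2, h3⟩
    refine ⟨A.filter (fun t => ¬ r v t), insert v ((A.filter (fun t => r v t)) ∪ B),
      ⟨u, mem_filter.mpr ⟨huA, hru⟩⟩, ⟨v, mem_insert_self _ _⟩, ?_, ?_, ?_⟩
    · rw [disjoint_left]
      intro t ht1 ht2
      obtain ⟨htA, htn⟩ := mem_filter.mp ht1
      rcases mem_insert.mp ht2 with rfl | ht2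
      · exact hvA htA
      rcases mem_union.mp ht2 with ht2 | ht2
      · exact htn (mem_filter.mp ht2).2
      · exact (disjoint_left.mp hdisj) htA ht2
    · ext t
      simp only [mem_union, mem_insert, mem_filter]
      by_cases htv : r v t <;> by_cases htA : t ∈ A <;> by_cases htB : t ∈ B <;> tauto
    · intro c hc d hd
      obtain ⟨hcA, hcn⟩ := mem_filter.mp hc
      rcases mem_insert.mp hd with rfl | hd
      · exact fun h => hcn (hsymm _ _ h)
      rcases mem_union.mp hd with hd | hd
      · obtain ⟨hdA, hdp⟩ := mem_filter.mp hd
        exact fun h => (hedge' d hdA c hcA hdp hcn) (hsymm _ _ h)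
      · exact hcross c hcA d hd

lemma extend (r rc : Fin n → Fin n → Prop)
    (hsymm : ∀ a b, r a b → r b a) (hirr : ∀ a, ¬ r a a)
    (hexcl : ∀ a b, r a b → rc a b → False)
    (v : Fin n) (S' : Finset (Fin n)) (hv : v ∉ S') (hsp : SplitOn r S') :
    SplitOn r (insert v S') ∨ SplitOn rc (insert v S') ∨ HasP4 r (insert v S') := by
  classical
  obtain ⟨A, B, hA, hB, hdisj, hun, hcross⟩ := hsp
  have hvA : v ∉ A := fun h => hv (hun ▸ mem_union_left _ h)
  have hvB : v ∉ B := fun h => hv (hun ▸ mem_union_right _ h)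
  by_cases hBv : ∀ b ∈ B, ¬ r v b
  · left
    refine ⟨insert v A, B, insert_nonempty _ _, hB, ?_, ?_, ?_⟩
    · rw [disjoint_left]
      intro t ht1 ht2
      rcases mem_insert.mp ht1 with rfl | ht1
      · exact hvB ht2
      · exact (disjoint_left.mp hdisj) ht1 ht2
    · rw [insert_union, hun]
    · intro a ha bb hbb
      rcases mem_insert.mp ha with rfl | ha
      · exact hBv bb hbb
      · exact hcross a ha bb hbb
  by_cases hAv : ∀ a ∈ A, ¬ r v a
  · left
    refine ⟨A, insert v B, hA, insert_nonempty _ _, ?_, ?_, ?_⟩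
    · rw [disjoint_left]
      intro t ht1 ht2
      rcases mem_insert.mp ht2 with rfl | ht2
      · exact hvA ht1
      · exact (disjoint_left.mp hdisj) ht1 ht2
    · rw [union_insert, hun]
    · intro a ha bb hbb
      rcases mem_insert.mp hbb with rfl | hbb
      · exact fun h => (hAv a ha) (hsymm _ _ h)
      · exact hcross a ha bb hbb
  push_neg at hBv hAv
  obtain ⟨b, hbB, hrb⟩ := hBv
  obtain ⟨a, haA, hra⟩ := hAv
  by_cases hall : ∀ u ∈ S', r v u
  · right; left
    have hS' : S'.Nonempty := ⟨a, hun ▸ mem_union_left _ haA⟩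
    refine ⟨{v}, S', singleton_nonempty _, hS', ?_, ?_, ?_⟩
    · exact disjoint_singleton_left.mpr hv
    · ext t; simp [Finset.mem_insert, or_comm]
    · intro x hx y hy
      rcases mem_singleton.mp hx with rfl
      exact fun h => hexcl x y (hall y hy) h
  push_neg at hall
  obtain ⟨u, huS, hru⟩ := hall
  have h1 : insert v S' = insert v (A ∪ B) := by rw [hun]
  rw [h1]
  rcases mem_union.mp (hun ▸ huS) with huA | huB
  · rcases inner r hsymm hirr v A B hvA hvB hdisj hcross b hbB hrb u huA hru with h | h
    · exact Or.inl h
    · exact Or.inr (Or.inr h)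
  · have hcross' : ∀ bb ∈ B, ∀ aa ∈ A, ¬ r bb aa :=
      fun bb hbb aa haa h => hcross aa haa bb hbb (hsymm _ _ h)
    have h2 := inner r hsymm hirr v B A hvB hvA hdisj.symm hcross' a haA hra u huB hru
    rw [union_comm A B]
    rcases h2 with h | h
    · exact Or.inl h
    · exact Or.inr (Or.inr h)


open Finset in
lemma hasP4_compl {σ : Equiv.Perm (Fin n)} {S : Finset (Fin n)}
    (h : HasP4 (E' σ) S) : HasP4 (E σ) S := by
  obtain ⟨x, y, z, w, hx, hy, hz, hw, d1, d2, d3, d4, d5, d6, e1, e2, e3, n1, n2, n3⟩ := h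
  have hzx : E σ z x := by
    rcases E_tot σ z x (Ne.symm d2) with h | h
    · exact h
    · exact absurd (E'_symm σ _ _ h) n1
  have hxw : E σ x w := by
    rcases E_tot σ x w d3 with h | h
    · exact h
    · exact absurd h n2
  have hwy : E σ w y := by
    rcases E_tot σ w y (Ne.symm d5) with h | h
    · exact h
    · exact absurd (E'_symm σ _ _ h) n3
  exact ⟨z, x, w, y, hz, hx, hw, hy, Ne.symm d2, d6, Ne.symm d4, d3, d1, Ne.symm d5,
    hzx, hxw, hwy, fun h => E_excl σ z w h e3,
    fun h => E_excl σ y z (E_symm σ _ _ h) e2, fun h => E_excl σ x y h e1⟩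

open Finset in
lemma seinsche (σ : Equiv.Perm (Fin n)) :
    ∀ S : Finset (Fin n), 2 ≤ S.card →
      SplitOn (E σ) S ∨ SplitOn (E' σ) S ∨ HasP4 (E σ) S := by
  classical
  intro S
  induction S using Finset.strongInduction with
  | _ S ih =>
    intro hcard
    by_cases h2 : S.card = 2
    · obtain ⟨a, b, hab, rfl⟩ := Finset.card_eq_two.mp h2
      have hmem : ({a, b} : Finset (Fin n)) = {a} ∪ {b} := by
        ext t; simp
      by_cases hE : E σ a b
      · right; left
        refine ⟨{a}, {b}, singleton_nonempty _, singleton_nonempty _,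
          by simp [hab, Ne.symm hab], hmem.symm, ?_⟩
        intro x hx y hy
        rcases mem_singleton.mp hx with rfl
        rcases mem_singleton.mp hy with rfl
        exact fun h => E_excl σ x y hE h
      · left
        refine ⟨{a}, {b}, singleton_nonempty _, singleton_nonempty _,
          by simp [hab, Ne.symm hab], hmem.symm, ?_⟩
        intro x hx y hy
        rcases mem_singleton.mp hx with rfl
        rcases mem_singleton.mp hy with rfl
        exact hE
    · have h3 : 3 ≤ S.card := by omega
      have hpos : 0 < S.card := by omega
      obtain ⟨v, hv⟩ := Finset.card_pos.mp hpos
      have hss : S.erase v ⊂ S := Finset.erase_ssubset hv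
      have hc' : 2 ≤ (S.erase v).card := by
        rw [Finset.card_erase_of_mem hv]; omega
      have hins : insert v (S.erase v) = S := Finset.insert_erase hv
      have hvnot : v ∉ S.erase v := Finset.notMem_erase v S
      rcases ih _ hss hc' with h | h | h
      · rcases extend (E σ) (E' σ) (E_symm σ) (E_irr σ) (E_excl σ) v _ hvnot h with h | h | h
        · exact Or.inl (hins ▸ h)
        · exact Or.inr (Or.inl (hins ▸ h))
        · exact Or.inr (Or.inr (hins ▸ h))
      · rcases extend (E' σ) (E σ) (E'_symm σ) (E'_irr σ) (E'_excl σ) v _ hvnot h with h | h | h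
        · exact Or.inr (Or.inl (hins ▸ h))
        · exact Or.inl (hins ▸ h)
        · exact Or.inr (Or.inr (hins ▸ hasP4_compl h))
      · exact Or.inr (Or.inr (hins ▸ hasP4_mono (Finset.subset_insert _ _) h))


lemma reach_keep (r : Fin n → Fin n → Prop) (C : Finset (Fin n))
    (hsep : ∀ p ∈ C, ∀ q, q ∉ C → ¬ r p q)
    (P : Fin n → Prop)
    (hstep : ∀ c ∈ C, ∀ d ∈ C, P c → r c d → P d)
    {x y : Fin n} (h : Relation.ReflTransGen r x y) (hx : x ∈ C) (hP : P x) :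
    y ∈ C ∧ P y := by
  induction h with
  | refl => exact ⟨hx, hP⟩
  | @tail b c h1 h2 ih =>
    obtain ⟨hc, hPc⟩ := ih
    have hd : c ∈ C := by
      by_contra hq
      exact hsep _ hc _ hq h2
    exact ⟨hd, hstep _ hc _ hd hPc h2⟩

lemma interval_of_component (σ : Equiv.Perm (Fin n)) (r : Fin n → Fin n → Prop)
    (hsymm : ∀ a b, r a b → r b a)
    (Hpos : ∀ c j d : Fin n, (c : ℕ) < j → (j : ℕ) < d → ¬ r c j → ¬ r j d → ¬ r c d)
    (Hval : ∀ c j d : Fin n, (σ c : ℕ) < σ j → (σ j : ℕ) < σ d → ¬ r c j → ¬ r j d → ¬ r c d)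
    (C : Finset (Fin n))
    (hconn : ∀ p ∈ C, ∀ q ∈ C, Relation.ReflTransGen r p q)
    (hsep : ∀ p ∈ C, ∀ q, q ∉ C → ¬ r p q) :
    IsPermInterval σ C := by
  classical
  constructor
  · intro i j k hi hk hij hjk
    by_contra hj
    have hune : i ≠ j := by rintro rfl; exact hj hi
    have hwne : k ≠ j := by rintro rfl; exact hj hk
    have hij' : (i : ℕ) < j := lt_of_le_of_ne hij (val_ne hune)
    have hjk' : (j : ℕ) < k := lt_of_le_of_ne (Fin.le_def.mp hjk) fun hc =>
      (val_ne hwne) hc.symm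
    have hstep : ∀ c ∈ C, ∀ d ∈ C, ((c : ℕ) < j) → r c d → ((d : ℕ) < j) := by
      intro c hc d hd hcj hrcd
      by_contra hdj
      have hdne : d ≠ j := by rintro rfl; exact hj hd
      have hjd : (j : ℕ) < d := lt_of_le_of_ne (not_lt.mp hdj) fun hc2 =>
        (val_ne hdne) hc2.symm
      exact Hpos c j d hcj hjd (hsep c hc j hj)
        (fun h => hsep d hd j hj (hsymm _ _ h)) hrcd
    have := reach_keep r C hsep _ hstep (hconn i hi k hk) hi hij'
    omega
  · intro i j k hi hk hij hjk
    obtain ⟨u, huC, hu⟩ := Finset.mem_image.mp hi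
    obtain ⟨w, hwC, hw⟩ := Finset.mem_image.mp hk
    subst hu; subst hw
    by_cases hm : σ.symm j ∈ C
    · exact Finset.mem_image.mpr ⟨σ.symm j, hm, σ.apply_symm_apply j⟩
    exfalso
    set m := σ.symm j with hmdef
    have hσm : σ m = j := σ.apply_symm_apply j
    have hum : u ≠ m := by rintro rfl; exact hm huC
    have hwm : w ≠ m := by rintro rfl; exact hm hwC
    have hij' : (σ u : ℕ) < σ m := by
      rw [hσm]; exact lt_of_le_of_ne (Fin.le_def.mp hij) (hσm ▸ sval_ne hum)
    have hjk' : (σ m : ℕ) < σ w := by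
      rw [hσm]
      exact lt_of_le_of_ne (Fin.le_def.mp hjk) fun hc => (hσm ▸ sval_ne hwm) hc.symm
    have hstep : ∀ c ∈ C, ∀ d ∈ C, ((σ c : ℕ) < σ m) → r c d → ((σ d : ℕ) < σ m) := by
      intro c hc d hd hcj hrcd
      by_contra hdj
      have hdne : d ≠ m := by rintro rfl; exact hm hd
      have hjd : (σ m : ℕ) < σ d := lt_of_le_of_ne (not_lt.mp hdj) fun hc2 =>
        (sval_ne hdne) hc2.symm
      exact Hval c m d hcj hjd (hsep c hc m hm)
        (fun h => hsep d hd m hm (hsymm _ _ h)) hrcd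
    have := reach_keep r C hsep _ hstep (hconn u huC w hwC) huC hij'
    omega

lemma E_Hpos (σ : Equiv.Perm (Fin n)) :
    ∀ c j d : Fin n, (c : ℕ) < j → (j : ℕ) < d → ¬ E σ c j → ¬ E σ j d → ¬ E σ c d := by
  intro c j d h1 h2 h3 h4; unfold E at *; omega

lemma E_Hval (σ : Equiv.Perm (Fin n)) :
    ∀ c j d : Fin n, (σ c : ℕ) < σ j → (σ j : ℕ) < σ d → ¬ E σ c j → ¬ E σ j d → ¬ E σ c d := by
  intro c j d h1 h2 h3 h4; unfold E at *; omega

lemma E'_Hpos (σ : Equiv.Perm (Fin n)) :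
    ∀ c j d : Fin n, (c : ℕ) < j → (j : ℕ) < d → ¬ E' σ c j → ¬ E' σ j d → ¬ E' σ c d := by
  intro c j d h1 h2 h3 h4; unfold E' at *; omega

lemma E'_Hval (σ : Equiv.Perm (Fin n)) :
    ∀ c j d : Fin n, (σ c : ℕ) < σ j → (σ j : ℕ) < σ d → ¬ E' σ c j → ¬ E' σ j d → ¬ E' σ c d := by
  intro c j d h1 h2 h3 h4; unfold E' at *; omega

lemma reach_subset (r : Fin n → Fin n → Prop) (A B : Finset (Fin n))
    (hun : A ∪ B = Finset.univ) (hcross : ∀ a ∈ A, ∀ b ∈ B, ¬ r a b)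
    {x t : Fin n} (hx : x ∈ A) (h : Relation.ReflTransGen r x t) : t ∈ A := by
  induction h with
  | refl => exact hx
  | tail h1 h2 ih =>
    rcases Finset.mem_union.mp (hun ▸ Finset.mem_univ _) with h | h
    · exact h
    · exact absurd h2 (hcross _ ih _ h)

lemma edgeless_of_split (σ : Equiv.Perm (Fin n)) (r : Fin n → Fin n → Prop)
    (hsymm : ∀ a b, r a b → r b a) (hne : ∀ a b, r a b → a ≠ b)
    (Hpos : ∀ c j d : Fin n, (c : ℕ) < j → (j : ℕ) < d → ¬ r c j → ¬ r j d → ¬ r c d)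
    (Hval : ∀ c j d : Fin n, (σ c : ℕ) < σ j → (σ j : ℕ) < σ d → ¬ r c j → ¬ r j d → ¬ r c d)
    (hσ : IsSimple σ) (hsp : SplitOn r Finset.univ) : ∀ x y, ¬ r x y := by
  classical
  obtain ⟨A, B, hA, hB, hdisj, hun, hcross⟩ := hsp
  have main : ∀ (A B : Finset (Fin n)), Disjoint A B → A ∪ B = Finset.univ →
      (∀ a ∈ A, ∀ b ∈ B, ¬ r a b) → B.Nonempty →
      ∀ x y, x ∈ A → r x y → False := by
    intro A B hdisj hun hcross hB x y hxA hxy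
    set C : Finset (Fin n) := Finset.univ.filter (fun t => Relation.ReflTransGen r x t)
      with hC
    have hmemC : ∀ t, t ∈ C ↔ Relation.ReflTransGen r x t := by
      intro t; simp [hC]
    have hxC : x ∈ C := (hmemC x).mpr Relation.ReflTransGen.refl
    have hyC : y ∈ C := (hmemC y).mpr (Relation.ReflTransGen.single hxy)
    have hsubA : ∀ t ∈ C, t ∈ A := fun t ht =>
      reach_subset r A B hun hcross hxA ((hmemC t).mp ht)
    have hconn : ∀ p ∈ C, ∀ q ∈ C, Relation.ReflTransGen r p q := by
      intro p hp q hq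
      exact Relation.ReflTransGen.trans
        (by haveI : Std.Symm r := ⟨hsymm⟩; exact Relation.ReflTransGen.symmetric.symm _ _ ((hmemC p).mp hp)) ((hmemC q).mp hq)
    have hsep : ∀ p ∈ C, ∀ q, q ∉ C → ¬ r p q := by
      intro p hp q hq hrpq
      exact hq ((hmemC q).mpr (Relation.ReflTransGen.tail ((hmemC p).mp hp) hrpq))
    have hint := interval_of_component σ r hsymm Hpos Hval C hconn hsep
    obtain ⟨b, hbB⟩ := hB
    have hbC : b ∉ C := fun h => (Finset.disjoint_left.mp hdisj) (hsubA b h) hbB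
    have hCuniv : C ≠ Finset.univ := fun h => hbC (h ▸ Finset.mem_univ b)
    rcases hσ C hint with h | h
    · have h2 : ({x, y} : Finset (Fin n)) ⊆ C := by
        intro t ht
        rcases Finset.mem_insert.mp ht with rfl | ht
        · exact hxC
        · exact (Finset.mem_singleton.mp ht) ▸ hyC
      have h3 : ({x, y} : Finset (Fin n)).card = 2 := by
        rw [Finset.card_insert_of_notMem (by simp [hne x y hxy]), Finset.card_singleton]
      have := Finset.card_le_card h2
      omega
    · exact hCuniv h
  intro x y hxy
  rcases Finset.mem_union.mp (hun ▸ Finset.mem_univ x) with hx | hx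
  · exact main A B hdisj hun hcross hB x y hx hxy
  · have hcross' : ∀ b ∈ B, ∀ a ∈ A, ¬ r b a :=
      fun b hb a ha h => hcross a ha b hb (hsymm _ _ h)
    exact main B A hdisj.symm (by rw [Finset.union_comm]; exact hun) hcross' hA x y hx hxy


lemma not_simple_bimono (σ : Equiv.Perm (Fin n)) (h4 : 4 ≤ n)
    (h : (∀ a b : Fin n, (a : ℕ) < b → (σ a : ℕ) < σ b) ∨
         (∀ a b : Fin n, (a : ℕ) < b → (σ b : ℕ) < σ a)) :
    ¬ IsSimple σ := by
  intro hσ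
  have h0 : (0 : ℕ) < n := by omega
  have h1 : (1 : ℕ) < n := by omega
  have h2 : (2 : ℕ) < n := by omega
  set i0 : Fin n := ⟨0, h0⟩ with hi0
  set i1 : Fin n := ⟨1, h1⟩ with hi1
  set i2 : Fin n := ⟨2, h2⟩ with hi2
  have hv0 : (i0 : ℕ) = 0 := rfl
  have hv1 : (i1 : ℕ) = 1 := rfl
  have hv2 : (i2 : ℕ) = 2 := rfl
  set s : Finset (Fin n) := {i0, i1} with hs
  have hmem : ∀ t : Fin n, t ∈ s ↔ (t : ℕ) ≤ 1 := by
    intro t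
    constructor
    · intro ht
      rcases Finset.mem_insert.mp ht with rfl | ht
      · simp [hv0]
      · rw [Finset.mem_singleton.mp ht]
    · intro ht
      rcases Nat.lt_or_ge (t : ℕ) 1 with h | h
      · have : t = i0 := Fin.ext (by rw [hv0]; omega)
        rw [this]; exact Finset.mem_insert_self _ _
      · have : t = i1 := Fin.ext (by rw [hv1]; omega)
        rw [this]; exact Finset.mem_insert_of_mem (Finset.mem_singleton_self _)
  have hcons : IsConsecutive s := by
    intro a b c ha hc hab hbc
    rw [hmem] at *
    have := Fin.le_def.mp hab
    have := Fin.le_def.mp hbc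
    omega
  have himg : ∀ t : Fin n, t ∈ s.image σ ↔ t = σ i0 ∨ t = σ i1 := by
    intro t
    simp only [hs, Finset.image_insert, Finset.image_singleton,
      Finset.mem_insert, Finset.mem_singleton]
  have hvals : IsConsecutive (s.image σ) := by
    intro a b c ha hc hab hbc
    rw [himg] at *
    set m : Fin n := σ.symm b with hmdef
    have hσm : σ m = b := σ.apply_symm_apply b
    by_cases hms : (m : ℕ) ≤ 1
    · rcases Nat.lt_or_ge (m : ℕ) 1 with hh | hh
      · left; rw [← hσm]; congr 1; exact Fin.ext (by rw [hv0]; omega)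
      · right; rw [← hσm]; congr 1; exact Fin.ext (by rw [hv1]; omega)
    exfalso
    have hm1 : (1 : ℕ) < m := by omega
    have hab' := Fin.le_def.mp hab
    have hbc' := Fin.le_def.mp hbc
    rcases h with hm | hm
    · have k1 : (σ i0 : ℕ) < σ i1 := hm i0 i1 (by rw [hv0, hv1]; omega)
      have k2 : (σ i1 : ℕ) < σ m := hm i1 m hm1
      have hc' : (c : ℕ) ≤ σ i1 := by rcases hc with rfl | rfl <;> omega
      have : (σ m : ℕ) = b := by rw [hσm]
      omega
    · have k1 : (σ i1 : ℕ) < σ i0 := hm i0 i1 (by rw [hv0, hv1]; omega)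
      have k2 : (σ m : ℕ) < σ i1 := hm i1 m hm1
      have ha' : (σ i1 : ℕ) ≤ a := by rcases ha with rfl | rfl <;> omega
      have : (σ m : ℕ) = b := by rw [hσm]
      omega
  rcases hσ s ⟨hcons, hvals⟩ with hcard | huniv
  · have : i1 ∈ s := (hmem i1).mpr (by simp [hi1])
    have h01 : i0 ≠ i1 := by
      intro hc
      have := congrArg Fin.val hc
      rw [hv0, hv1] at this
      omega
    have : s.card = 2 := by
      rw [hs, Finset.card_insert_of_notMem (by simp [h01]), Finset.card_singleton]
    omega
  · have : i2 ∈ s := huniv ▸ Finset.mem_univ i2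
    rw [hmem] at this
    rw [hv2] at this
    omega


lemma pat_gen (σ : Equiv.Perm (Fin n)) (π : Equiv.Perm (Fin 4)) (q : Fin 4 → Fin n)
    (hq : ∀ i j : Fin 4, i < j → q i < q j)
    (hval : ∀ i j : Fin 4, π i < π j → σ (q i) < σ (q j)) :
    IsPattern π σ := by
  refine ⟨OrderEmbedding.ofStrictMono q (fun i j h => hq i j h), fun i j => ?_⟩
  constructor
  · intro h; exact hval i j h
  · intro h
    by_contra hc
    rcases lt_trichotomy (π i) (π j) with h2 | h2 | h2
    · exact hc h2
    · have : i = j := π.injective h2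
      subst this
      exact lt_irrefl _ h
    · exact absurd h (not_lt.mpr (le_of_lt (hval j i h2)))

lemma pat2413_of (σ : Equiv.Perm (Fin n)) (q : Fin 4 → Fin n)
    (hq : ∀ i j : Fin 4, i < j → q i < q j)
    (h1 : (σ (q 2) : ℕ) < σ (q 0)) (h2 : (σ (q 0) : ℕ) < σ (q 3))
    (h3 : (σ (q 3) : ℕ) < σ (q 1)) :
    IsPattern p2413 σ := by
  refine pat_gen σ p2413 q hq ?_
  intro i j h
  fin_cases i <;> fin_cases j <;>
    first
      | exact absurd h (by decide)
      | exact h1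
      | exact h2
      | exact h3
      | exact h1.trans h2
      | exact h2.trans h3
      | exact h1.trans (h2.trans h3)

lemma pat3142_of (σ : Equiv.Perm (Fin n)) (q : Fin 4 → Fin n)
    (hq : ∀ i j : Fin 4, i < j → q i < q j)
    (h1 : (σ (q 1) : ℕ) < σ (q 3)) (h2 : (σ (q 3) : ℕ) < σ (q 0))
    (h3 : (σ (q 0) : ℕ) < σ (q 2)) :
    IsPattern p3142 σ := by
  refine pat_gen σ p3142 q hq ?_
  intro i j h
  fin_cases i <;> fin_cases j <;>
    first
      | exact absurd h (by decide)
      | exact h1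
      | exact h2
      | exact h3
      | exact h1.trans h2
      | exact h2.trans h3
      | exact h1.trans (h2.trans h3)


lemma p4_pattern (σ : Equiv.Perm (Fin n)) (x y z w : Fin n)
    (d1 : x ≠ y) (d2 : x ≠ z) (d3 : x ≠ w) (d4 : y ≠ z) (d5 : y ≠ w) (d6 : z ≠ w)
    (e1 : E σ x y) (e2 : E σ y z) (e3 : E σ z w)
    (n1 : ¬ E σ x z) (n2 : ¬ E σ x w) (n3 : ¬ E σ y w) :
    IsPattern p2413 σ ∨ IsPattern p3142 σ := by
  classical
  obtain ⟨q, hqmono, hx, hy, hz, hw⟩ :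
      ∃ q : Fin 4 → Fin n, (∀ i j : Fin 4, i < j → q i < q j) ∧
        (x = q 0 ∨ x = q 1 ∨ x = q 2 ∨ x = q 3) ∧
        (y = q 0 ∨ y = q 1 ∨ y = q 2 ∨ y = q 3) ∧
        (z = q 0 ∨ z = q 1 ∨ z = q 2 ∨ z = q 3) ∧
        (w = q 0 ∨ w = q 1 ∨ w = q 2 ∨ w = q 3) := by
    set s : Finset (Fin n) := {x, y, z, w} with hs
    have hcard : s.card = 4 := by
      rw [hs, Finset.card_insert_of_notMem (by simp [d1, d2, d3]),
        Finset.card_insert_of_notMem (by simp [d4, d5]),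
        Finset.card_insert_of_notMem (by simp [d6]), Finset.card_singleton]
    set iso := s.orderIsoOfFin hcard with hiso
    set q : Fin 4 → Fin n := fun i => (iso i : Fin n) with hqdef
    have hqmono : ∀ i j : Fin 4, i < j → q i < q j := by
      intro i j h
      exact Subtype.coe_lt_coe.mpr (iso.strictMono h)
    have hmem : ∀ u, u ∈ s → u = q 0 ∨ u = q 1 ∨ u = q 2 ∨ u = q 3 := by
      intro u hu
      obtain ⟨i, hi⟩ : ∃ i : Fin 4, iso i = ⟨u, hu⟩ :=
        ⟨iso.symm ⟨u, hu⟩, iso.apply_symm_apply _⟩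
      have hqi : q i = u := congrArg Subtype.val hi
      fin_cases i
      · exact Or.inl hqi.symm
      · exact Or.inr (Or.inl hqi.symm)
      · exact Or.inr (Or.inr (Or.inl hqi.symm))
      · exact Or.inr (Or.inr (Or.inr hqi.symm))
    exact ⟨q, hqmono, hmem x (by simp [hs]), hmem y (by simp [hs]),
      hmem z (by simp [hs]), hmem w (by simp [hs])⟩
  have h01 : (q 0 : ℕ) < q 1 := hqmono 0 1 (by decide)
  have h12 : (q 1 : ℕ) < q 2 := hqmono 1 2 (by decide)
  have h23 : (q 2 : ℕ) < q 3 := hqmono 2 3 (by decide)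
  have v1 : (σ x : ℕ) ≠ σ y := sval_ne d1
  have v2 : (σ x : ℕ) ≠ σ z := sval_ne d2
  have v3 : (σ x : ℕ) ≠ σ w := sval_ne d3
  have v4 : (σ y : ℕ) ≠ σ z := sval_ne d4
  have v5 : (σ y : ℕ) ≠ σ w := sval_ne d5
  have v6 : (σ z : ℕ) ≠ σ w := sval_ne d6
  unfold E at e1 e2 e3 n1 n2 n3
  rcases hx with hx | hx | hx | hx <;> subst hx <;>
  rcases hy with hy | hy | hy | hy <;> subst hy <;>
  rcases hz with hz | hz | hz | hz <;> subst hz <;>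
  rcases hw with hw | hw | hw | hw <;> subst hw <;>
  first
    | exact absurd rfl d1
    | exact absurd rfl d2
    | exact absurd rfl d3
    | exact absurd rfl d4
    | exact absurd rfl d5
    | exact absurd rfl d6
    | exact Or.inl (pat2413_of σ q hqmono (by omega) (by omega) (by omega))
    | exact Or.inr (pat3142_of σ q hqmono (by omega) (by omega) (by omega))

end SimplePf

/-- Every simple permutation of size at least 4 contains `2413` or `3142`
as a pattern. -/
theorem simple_contains_2413_or_3142 {n : ℕ} (σ : Equiv.Perm (Fin n))
    (hσ : IsSimple σ) (h4 : 4 ≤ n) :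
    IsPattern p2413 σ ∨ IsPattern p3142 σ := by
  classical
  have hcard : 2 ≤ (Finset.univ : Finset (Fin n)).card := by
    rw [Finset.card_univ, Fintype.card_fin]; omega
  rcases SimplePf.seinsche σ Finset.univ hcard with h | h | h
  · exfalso
    have hedgeless := SimplePf.edgeless_of_split σ (SimplePf.E σ) (SimplePf.E_symm σ)
      (fun a b hab => SimplePf.E_ne hab) (SimplePf.E_Hpos σ) (SimplePf.E_Hval σ) hσ h
    have hmono : ∀ a b : Fin n, (a : ℕ) < b → (σ a : ℕ) < σ b := by
      intro a b hab
      have hne : a ≠ b := by rintro rfl; omega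
      have h2 := SimplePf.sval_ne (σ := σ) hne
      have h3 := hedgeless a b
      unfold SimplePf.E at h3
      omega
    exact SimplePf.not_simple_bimono σ h4 (Or.inl hmono) hσ
  · exfalso
    have hedgeless := SimplePf.edgeless_of_split σ (SimplePf.E' σ) (SimplePf.E'_symm σ)
      (fun a b hab => SimplePf.E'_ne hab) (SimplePf.E'_Hpos σ) (SimplePf.E'_Hval σ) hσ h
    have hanti : ∀ a b : Fin n, (a : ℕ) < b → (σ b : ℕ) < σ a := by
      intro a b hab
      have hne : a ≠ b := by rintro rfl; omega
      have h2 := SimplePf.sval_ne (σ := σ) hne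
      have h3 := hedgeless a b
      unfold SimplePf.E' at h3
      omega
    exact SimplePf.not_simple_bimono σ h4 (Or.inr hanti) hσ
  · obtain ⟨x, y, z, w, _, _, _, _, d1, d2, d3, d4, d5, d6, e1, e2, e3, hn1, hn2, hn3⟩ := h
    exact SimplePf.p4_pattern σ x y z w d1 d2 d3 d4 d5 d6 e1 e2 e3 hn1 hn2 hn3
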